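/- Let 𝔸 = (A, ≤, →, Σ) be an implicative algebra with |A| < κ for a strongly inaccessible cardinal κ, and let W, ∈_W, =_W and the interpretation ‖·‖ be as defined below. Then W validates every instance of the ∈-Induction scheme: for every formula in context φ[w₁,…,wₙ,x], the interpretation of ∀w₁…∀wₙ (∀x(∀y(y ∈ x → φ[y/x]) → φ) → ∀x φ) belongs to Σ. -/

import Mathlib

universe u

/-- An implicative algebra `𝔸 = (A, ≤, →, Σ)`:  a complete lattice `(A, ≤)` together with an
implication `imp` which is antitone in its first argument, monotone in its second argument and
turns infima in the second argument into infima, and a separator `Sig ⊆ A` which is upward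
closed, closed under modus ponens and contains the combinators `K` and `S`. -/
structure ImplicativeAlgebra (A : Type u) [CompleteLattice A] where
  imp : A → A → A
  imp_antitone : ∀ ⦃a a' b : A⦄, a ≤ a' → imp a' b ≤ imp a b
  imp_monotone : ∀ ⦃a b b' : A⦄, b ≤ b' → imp a b ≤ imp a b'
  imp_sInf : ∀ (a : A) (S : Set A), imp a (sInf S) = ⨅ b ∈ S, imp a b
  Sig : Set A
  Sig_upward : ∀ ⦃a b : A⦄, a ∈ Sig → a ≤ b → b ∈ Sig
  Sig_mp : ∀ ⦃a b : A⦄, imp a b ∈ Sig → a ∈ Sig → b ∈ Sig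
  Sig_K : (⨅ a : A, ⨅ b : A, imp a (imp b a)) ∈ Sig
  Sig_S : (⨅ a : A, ⨅ b : A, ⨅ c : A,
      imp (imp a (imp b c)) (imp (imp a b) (imp a c))) ∈ Sig

namespace ImplicativeAlgebra

variable {A : Type u} [CompleteLattice A]

/-- `a × b := ⨅ x, ((a → (b → x)) → x)`. -/
def times (IA : ImplicativeAlgebra A) (a b : A) : A :=
  ⨅ x : A, IA.imp (IA.imp a (IA.imp b x)) x

/-- `a + b := ⨅ x, ((a → x) → ((b → x) → x))`. -/
def plus (IA : ImplicativeAlgebra A) (a b : A) : A :=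
  ⨅ x : A, IA.imp (IA.imp a x) (IA.imp (IA.imp b x) x)

/-- `∃⃗_{i} f i := ⨅ x, ((⨅ i, (f i → x)) → x)`.  (`∀⃗` is just `⨅`.) -/
def aex (IA : ImplicativeAlgebra A) {ι : Sort*} (f : ι → A) : A :=
  ⨅ x : A, IA.imp (⨅ i, IA.imp (f i) x) x

/-- `φ ⊢_{Σ[I]} ψ` iff `⨅ i, (φ i → ψ i) ∈ Σ`. -/
def SigLe (IA : ImplicativeAlgebra A) {ι : Sort*} (f g : ι → A) : Prop :=
  (⨅ i, IA.imp (f i) (g i)) ∈ IA.Sig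

/-- `φ ≡_{Σ[I]} ψ` iff `φ ⊢_{Σ[I]} ψ` and `ψ ⊢_{Σ[I]} φ`. -/
def SigEquiv (IA : ImplicativeAlgebra A) {ι : Sort*} (f g : ι → A) : Prop :=
  IA.SigLe f g ∧ IA.SigLe g f

end ImplicativeAlgebra

/-- Pre-elements of the cumulative hierarchy of partial functions valued in `A`:
an element is an `A`-labelled family of previously constructed elements, i.e. a partial
function (presented by a family indexed by its domain) from earlier elements to `A`. -/
inductive PreW (A : Type u) : Type (u + 1)
  | mk (ι : Type u) (fam : ι → PreW A) (val : ι → A)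

namespace PreW

variable {A : Type u}

/-- The (index type of the) domain of a partial function. -/
def dom : PreW A → Type u
  | ⟨ι, _, _⟩ => ι

/-- The family of elements of the domain. -/
def fam : (w : PreW A) → w.dom → PreW A
  | ⟨_, f, _⟩ => f

/-- The values in `A` of the partial function. -/
def val : (w : PreW A) → w.dom → A
  | ⟨_, _, v⟩ => v

/-- `w` is hereditarily of size `< κ`:  this carves out exactly the elements of the stage
`W_κ` of the hierarchy (for `κ` inaccessible). -/
def HSmall (κ : Cardinal.{u}) : PreW A → Prop
  | ⟨ι, f, _⟩ => Cardinal.mk ι < κ ∧ ∀ i, HSmall κ (f i)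

theorem HSmall.fam {κ : Cardinal.{u}} :
    ∀ {w : PreW A}, w.HSmall κ → ∀ i : w.dom, (w.fam i).HSmall κ
  | ⟨_, _, _⟩, h, i => h.2 i

/-- The rank of an element of the hierarchy. -/
noncomputable def rank : PreW A → Ordinal.{u}
  | ⟨_, f, _⟩ => ⨆ i, Order.succ (rank (f i))

theorem rank_lt_mk {ι : Type u} (f : ι → PreW A) (v : ι → A) (i : ι) :
    (f i).rank < (PreW.mk ι f v).rank := by
  have h : Order.succ (f i).rank ≤ ⨆ j, Order.succ (f j).rank := Ordinal.le_iSup _ i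
  have : (f i).rank < ⨆ j, Order.succ (f j).rank :=
    lt_of_lt_of_le (Order.lt_succ _) h
  simpa [rank] using this

end PreW

namespace ImplicativeAlgebra

variable {A : Type u} [CompleteLattice A]

/-- `α =_W β`, defined by recursion on rank:
`α =_W β := (α ⊆_W β) × (β ⊆_W α)` where
`α ⊆_W β := ∀⃗_{t ∈ dom α} (α t → (fam α t ∈_W β))` and
`γ ∈_W β := ∃⃗_{s ∈ dom β} (β s × (fam β s =_W γ))`. -/
noncomputable def eqW (IA : ImplicativeAlgebra A) : PreW A → PreW A → A
  | ⟨ι₁, f₁, v₁⟩, ⟨ι₂, f₂, v₂⟩ =>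
    IA.times
      (⨅ t : ι₁, IA.imp (v₁ t)
        (IA.aex fun s : ι₂ => IA.times (v₂ s) (IA.eqW (f₂ s) (f₁ t))))
      (⨅ t : ι₂, IA.imp (v₂ t)
        (IA.aex fun s : ι₁ => IA.times (v₁ s) (IA.eqW (f₁ s) (f₂ t))))
termination_by α β => max α.rank β.rank
decreasing_by
  · exact max_lt (lt_of_lt_of_le (PreW.rank_lt_mk f₂ v₂ s) le_sup_right)
      (lt_of_lt_of_le (PreW.rank_lt_mk f₁ v₁ t) le_sup_left)
  · exact max_lt (lt_of_lt_of_le (PreW.rank_lt_mk f₁ v₁ s) le_sup_left)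
      (lt_of_lt_of_le (PreW.rank_lt_mk f₂ v₂ t) le_sup_right)

/-- `α ∈_W β := ∃⃗_{s ∈ dom β} (β s × (fam β s =_W α))`. -/
noncomputable def memW (IA : ImplicativeAlgebra A) (α β : PreW A) : A :=
  IA.aex fun s : β.dom => IA.times (β.val s) (IA.eqW (β.fam s) α)

/-- `α ⊆_W β := ∀⃗_{t ∈ dom α} (α t → (fam α t ∈_W β))`. -/
noncomputable def subW (IA : ImplicativeAlgebra A) (α β : PreW A) : A :=
  ⨅ t : α.dom, IA.imp (α.val t) (IA.memW (α.fam t) β)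

end ImplicativeAlgebra

/-- The stage `W = W_κ` of the hierarchy: all hereditarily `< κ`-sized elements. -/
def WSet (A : Type u) (κ : Cardinal.{u}) : Type (u + 1) :=
  {w : PreW A // w.HSmall κ}

/-- An element of the domain of `w ∈ W`, as an element of `W`. -/
def WSet.fam {A : Type u} {κ : Cardinal.{u}} (w : WSet A κ) (i : w.1.dom) : WSet A κ :=
  ⟨w.1.fam i, w.2.fam i⟩

/-- Formulas (in context of length `n`) of the first-order language of set theory, with
(de Bruijn-style) variables `Fin n`, binary predicates `∈` and `=`, connectives `⊥`, `∧`, `∨`,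
`→` and quantifiers `∃`, `∀` (binding the last variable of the enlarged context). -/
inductive SetFormula : ℕ → Type
  | bot {n : ℕ} : SetFormula n
  | mem {n : ℕ} (i j : Fin n) : SetFormula n
  | eq {n : ℕ} (i j : Fin n) : SetFormula n
  | and {n : ℕ} (φ ψ : SetFormula n) : SetFormula n
  | or {n : ℕ} (φ ψ : SetFormula n) : SetFormula n
  | imp {n : ℕ} (φ ψ : SetFormula n) : SetFormula n
  | ex {n : ℕ} (φ : SetFormula (n + 1)) : SetFormula n
  | all {n : ℕ} (φ : SetFormula (n + 1)) : SetFormula n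

namespace SetFormula

/-- Renaming of variables (since the only terms of the language of set theory are variables,
substitution is a special case). -/
def rename : {n m : ℕ} → (Fin n → Fin m) → SetFormula n → SetFormula m
  | _, _, _, .bot => .bot
  | _, _, f, .mem i j => .mem (f i) (f j)
  | _, _, f, .eq i j => .eq (f i) (f j)
  | _, _, f, .and φ ψ => .and (φ.rename f) (ψ.rename f)
  | _, _, f, .or φ ψ => .or (φ.rename f) (ψ.rename f)
  | _, _, f, .imp φ ψ => .imp (φ.rename f) (ψ.rename f)
  | _, _, f, .ex φ => .ex (φ.rename (Fin.snoc (Fin.castSucc ∘ f) (Fin.last _)))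
  | _, _, f, .all φ => .all (φ.rename (Fin.snoc (Fin.castSucc ∘ f) (Fin.last _)))

/-- Universal closure `∀x₁ … ∀xₙ φ` of a formula in context of length `n`. -/
def allClose : {n : ℕ} → SetFormula n → SetFormula 0
  | 0, φ => φ
  | _ + 1, φ => allClose (.all φ)

end SetFormula

namespace ImplicativeAlgebra

variable {A : Type u} [CompleteLattice A]

/-- The interpretation `‖φ[x₁,…,xₙ]‖ : Wⁿ → A` of a formula in context, by recursion on the
structure of `φ`:  atomic formulas are interpreted by `∈_W` and `=_W`, `∧` by `×`, `∨` by `+`,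
`→` by `→`, `∃` by `∃⃗` over `W` and `∀` by `∀⃗` (i.e. `⨅`) over `W`. -/
noncomputable def interp (IA : ImplicativeAlgebra A) (κ : Cardinal.{u}) :
    {n : ℕ} → SetFormula n → (Fin n → WSet A κ) → A
  | _, .bot, _ => ⊥
  | _, .mem i j, v => IA.memW (v i).1 (v j).1
  | _, .eq i j, v => IA.eqW (v i).1 (v j).1
  | _, .and φ ψ, v => IA.times (IA.interp κ φ v) (IA.interp κ ψ v)
  | _, .or φ ψ, v => IA.plus (IA.interp κ φ v) (IA.interp κ ψ v)
  | _, .imp φ ψ, v => IA.imp (IA.interp κ φ v) (IA.interp κ ψ v)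
  | _, .ex φ, v => IA.aex fun β : WSet A κ => IA.interp κ φ (Fin.snoc v β)
  | _, .all φ, v => ⨅ β : WSet A κ, IA.interp κ φ (Fin.snoc v β)

end ImplicativeAlgebra

namespace MemInd

open ImplicativeAlgebra

variable {A : Type u} [CompleteLattice A] (IA : ImplicativeAlgebra A)

/-- Application in an implicative algebra. -/
def appA (a b : A) : A := sInf {x | a ≤ IA.imp b x}

lemma le_imp_appA (a b : A) : a ≤ IA.imp b (appA IA a b) := by
  rw [appA, IA.imp_sInf]
  exact le_iInf fun x => le_iInf fun hx => hx

lemma appA_le {a b c : A} (h : a ≤ IA.imp b c) : appA IA a b ≤ c := sInf_le h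

lemma appA_mono {a a' b b' : A} (ha : a ≤ a') (hb : b ≤ b') :
    appA IA a b ≤ appA IA a' b' :=
  appA_le IA (ha.trans ((le_imp_appA IA a' b').trans (IA.imp_antitone hb)))

lemma appA_mem {a b : A} (ha : a ∈ IA.Sig) (hb : b ∈ IA.Sig) : appA IA a b ∈ IA.Sig :=
  IA.Sig_mp (IA.Sig_upward ha (le_imp_appA IA a b)) hb

/-- The K combinator. -/
def Kc : A := ⨅ a : A, ⨅ b : A, IA.imp a (IA.imp b a)

lemma Kc_mem : Kc IA ∈ IA.Sig := IA.Sig_K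

lemma Kc_le (a b : A) : Kc IA ≤ IA.imp a (IA.imp b a) :=
  (iInf_le _ a).trans (iInf_le _ b)

/-- The S combinator. -/
def Sc : A := ⨅ a : A, ⨅ b : A, ⨅ c : A,
    IA.imp (IA.imp a (IA.imp b c)) (IA.imp (IA.imp a b) (IA.imp a c))

lemma Sc_mem : Sc IA ∈ IA.Sig := IA.Sig_S

lemma Sc_le (a b c : A) :
    Sc IA ≤ IA.imp (IA.imp a (IA.imp b c)) (IA.imp (IA.imp a b) (IA.imp a c)) :=
  ((iInf_le _ a).trans ((iInf_le _ b).trans (iInf_le _ c)))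

lemma K_spec (x y : A) : appA IA (appA IA (Kc IA) x) y ≤ x :=
  appA_le IA (appA_le IA (Kc_le IA x y))

/-- The identity combinator `S K K`. -/
def Ic : A := appA IA (appA IA (Sc IA) (Kc IA)) (Kc IA)

lemma Ic_mem : Ic IA ∈ IA.Sig :=
  appA_mem IA (appA_mem IA (Sc_mem IA) (Kc_mem IA)) (Kc_mem IA)

lemma Ic_le (a : A) : Ic IA ≤ IA.imp a a := by
  refine appA_le IA (appA_le IA ((Sc_le IA a (IA.imp a a) a).trans ?_))
  refine le_trans (IA.imp_antitone (Kc_le IA a (IA.imp a a))) ?_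
  exact IA.imp_monotone (IA.imp_antitone (Kc_le IA a a))

lemma S_spec (x y z : A) :
    appA IA (appA IA (appA IA (Sc IA) x) y) z ≤ appA IA (appA IA x z) (appA IA y z) := by
  refine appA_le IA (appA_le IA (appA_le IA ?_))
  refine (Sc_le IA z (appA IA y z) (appA IA (appA IA x z) (appA IA y z))).trans ?_
  refine le_trans (IA.imp_antitone ((le_imp_appA IA x z).trans
    (IA.imp_monotone (le_imp_appA IA (appA IA x z) (appA IA y z))))) ?_
  exact IA.imp_monotone (IA.imp_antitone (le_imp_appA IA y z))

end MemInd
namespace MemInd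

variable {A : Type u} [CompleteLattice A] (IA : ImplicativeAlgebra A)

/-- Terms over the implicative algebra, with free variables and constants. -/
inductive Tm (A : Type u) : ℕ → Type u
  | var {n : ℕ} (i : Fin n) : Tm A n
  | cst {n : ℕ} (a : A) : Tm A n
  | app {n : ℕ} (t u : Tm A n) : Tm A n

/-- Evaluation of a term in an environment. -/
def evalT : {n : ℕ} → Tm A n → (Fin n → A) → A
  | _, .var i, ρ => ρ i
  | _, .cst a, _ => a
  | _, .app t u, ρ => appA IA (evalT t ρ) (evalT u ρ)

/-- Bracket abstraction of the last variable. -/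
def absT : {n : ℕ} → Tm A (n + 1) → Tm A n
  | _, .var i => i.lastCases (.app (.app (.cst (Sc IA)) (.cst (Kc IA))) (.cst (Kc IA)))
      (fun j => .app (.cst (Kc IA)) (.var j))
  | _, .cst a => .app (.cst (Kc IA)) (.cst a)
  | _, .app t u => .app (.app (.cst (Sc IA)) (absT t)) (absT u)

lemma absT_spec : ∀ {n : ℕ} (t : Tm A (n + 1)) (ρ : Fin n → A) (a : A),
    appA IA (evalT IA (absT IA t) ρ) a ≤ evalT IA t (Fin.snoc ρ a)
  | n, .var i, ρ, a => by
    induction i using Fin.lastCases with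
    | last =>
      simp only [absT, Fin.lastCases_last, evalT, Fin.snoc_last]
      exact appA_le IA ((Ic_le IA a))
    | cast j =>
      simp only [absT, Fin.lastCases_castSucc, evalT, Fin.snoc_castSucc]
      exact K_spec IA _ a
  | n, .cst c, ρ, a => by
    simp only [absT, evalT]
    exact K_spec IA c a
  | n, .app t u, ρ, a => by
    simp only [absT, evalT]
    exact (S_spec IA _ _ a).trans (appA_mono IA (absT_spec t ρ a) (absT_spec u ρ a))

lemma abs_le_imp {n : ℕ} {t : Tm A (n + 1)} {ρ : Fin n → A} {a x : A}
    (h : evalT IA t (Fin.snoc ρ a) ≤ x) : evalT IA (absT IA t) ρ ≤ IA.imp a x :=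
  (le_imp_appA IA _ a).trans (IA.imp_monotone ((absT_spec IA t ρ a).trans h))

/-- All constants of a term belong to the separator. -/
def goodT : {n : ℕ} → Tm A n → Prop
  | _, .var _ => True
  | _, .cst a => a ∈ IA.Sig
  | _, .app t u => goodT t ∧ goodT u

lemma goodT_absT : ∀ {n : ℕ} {t : Tm A (n + 1)}, goodT IA t → goodT IA (absT IA t)
  | _, .var i, _ => by
    induction i using Fin.lastCases with
    | last =>
      simp only [absT, Fin.lastCases_last, goodT]
      exact ⟨⟨Sc_mem IA, Kc_mem IA⟩, Kc_mem IA⟩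
    | cast j =>
      simp only [absT, Fin.lastCases_castSucc, goodT]
      exact ⟨Kc_mem IA, trivial⟩
  | _, .cst a, h => by
    simp only [absT, goodT] at h ⊢
    exact ⟨Kc_mem IA, h⟩
  | _, .app t u, h => by
    simp only [absT, goodT] at h ⊢
    exact ⟨⟨Sc_mem IA, goodT_absT h.1⟩, goodT_absT h.2⟩

lemma evalT_mem : ∀ {n : ℕ} {t : Tm A n} {ρ : Fin n → A},
    goodT IA t → (∀ i, ρ i ∈ IA.Sig) → evalT IA t ρ ∈ IA.Sig
  | _, .var i, ρ, _, hρ => by simpa only [evalT] using hρ i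
  | _, .cst a, _, h, _ => by simp only [goodT] at h; simpa only [evalT] using h
  | _, .app t u, ρ, h, hρ => by
    simp only [goodT] at h
    simpa only [evalT] using appA_mem IA (evalT_mem h.1 hρ) (evalT_mem h.2 hρ)

/-- Evaluation of a closed term. -/
def evalC (t : Tm A 0) : A := evalT IA t Fin.elim0

lemma evalC_mem {t : Tm A 0} (h : goodT IA t) : evalC IA t ∈ IA.Sig :=
  evalT_mem IA h (fun i => i.elim0)

/-- Fixed point: `fixA c ≤ appA c (fixA c)`. -/
def fixD (c : A) : A :=
  evalC IA (absT IA (.app (.cst c) (.app (.var (Fin.last 0)) (.var (Fin.last 0)))))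

def fixA (c : A) : A := appA IA (fixD IA c) (fixD IA c)

lemma fixA_le (c : A) : fixA IA c ≤ appA IA c (fixA IA c) := by
  have h := absT_spec IA (.app (.cst c) (.app (.var (Fin.last 0)) (.var (Fin.last 0))))
    Fin.elim0 (fixD IA c)
  simpa only [evalT, Fin.snoc_last, fixA, evalC, fixD] using h

lemma fixA_mem {c : A} (h : c ∈ IA.Sig) : fixA IA c ∈ IA.Sig := by
  have hg : goodT IA (A := A)
      (.app (.cst c) (.app (.var (Fin.last 0)) (.var (Fin.last 0)))) := by
    simp only [goodT]
    exact ⟨h, trivial, trivial⟩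
  exact appA_mem IA (evalC_mem IA (goodT_absT IA hg)) (evalC_mem IA (goodT_absT IA hg))

end MemInd
namespace MemInd

open ImplicativeAlgebra

variable {A : Type u} [CompleteLattice A] (IA : ImplicativeAlgebra A)

/-- The second-projection-providing combinator `K I`. -/
def KI : A := appA IA (Kc IA) (Ic IA)

lemma KI_mem : KI IA ∈ IA.Sig := appA_mem IA (Kc_mem IA) (Ic_mem IA)

lemma KI_le (a b : A) : KI IA ≤ IA.imp a (IA.imp b b) :=
  (appA_le IA (Kc_le IA (Ic IA) a)).trans (IA.imp_monotone (Ic_le IA b))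

/-- The pairing combinator `λ u w f, f u w`. -/
def Pc : A := evalC IA (absT IA (absT IA (absT IA
  (.app (.app (.var (Fin.last 2)) (.var ((Fin.last 0).castSucc.castSucc)))
    (.var ((Fin.last 1).castSucc))))))

lemma Pc_mem : Pc IA ∈ IA.Sig := by
  refine evalC_mem IA (goodT_absT IA (goodT_absT IA (goodT_absT IA ?_)))
  simp only [goodT]
  exact ⟨⟨trivial, trivial⟩, trivial⟩

lemma pair_le {u w a b : A} (hu : u ≤ a) (hw : w ≤ b) :
    appA IA (appA IA (Pc IA) u) w ≤ IA.times a b := by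
  refine le_iInf fun x => ?_
  refine le_trans (appA_mono IA (absT_spec IA _ _ u) le_rfl) ?_
  refine le_trans (absT_spec IA _ _ w) (abs_le_imp IA ?_)
  simp only [evalT, Fin.snoc_castSucc, Fin.snoc_last]
  refine appA_le IA (appA_le IA ?_)
  exact le_trans (IA.imp_antitone hu) (IA.imp_monotone (IA.imp_antitone hw))

lemma fst_le {p a b : A} (hp : p ≤ IA.times a b) : appA IA p (Kc IA) ≤ a :=
  appA_le IA (hp.trans ((iInf_le _ a).trans (IA.imp_antitone (Kc_le IA a b))))

lemma snd_le {p a b : A} (hp : p ≤ IA.times a b) : appA IA p (KI IA) ≤ b :=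
  appA_le IA (hp.trans ((iInf_le _ b).trans (IA.imp_antitone (KI_le IA a b))))

/-- The existential-introduction combinator `λ u k, k u`. -/
def Ec : A := evalC IA (absT IA (absT IA
  (.app (.var (Fin.last 1)) (.var ((Fin.last 0).castSucc)))))

lemma Ec_mem : Ec IA ∈ IA.Sig := by
  refine evalC_mem IA (goodT_absT IA (goodT_absT IA ?_))
  simp only [goodT]
  exact ⟨trivial, trivial⟩

lemma exI_le {ι : Sort*} {f : ι → A} {u : A} (i : ι) (hu : u ≤ f i) :
    appA IA (Ec IA) u ≤ IA.aex f := by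
  refine le_iInf fun x => ?_
  refine le_trans (absT_spec IA _ _ u) ?_
  refine abs_le_imp IA ?_
  simp only [evalT, Fin.snoc_castSucc, Fin.snoc_last]
  refine appA_le IA ((iInf_le _ i).trans (IA.imp_antitone hu))

lemma exE_le {ι : Sort*} {f : ι → A} {p k x : A} (hp : p ≤ IA.aex f)
    (hk : ∀ i, k ≤ IA.imp (f i) x) : appA IA p k ≤ x :=
  appA_le IA (hp.trans ((iInf_le _ x).trans (IA.imp_antitone (le_iInf hk))))

lemma eqW_def (a b : PreW A) :
    IA.eqW a b = IA.times (IA.subW a b) (IA.subW b a) := by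
  obtain ⟨ι₁, f₁, v₁⟩ := a
  obtain ⟨ι₂, f₂, v₂⟩ := b
  rw [ImplicativeAlgebra.eqW]
  rfl

lemma rank_fam_lt (w : PreW A) (i : w.dom) : (w.fam i).rank < w.rank := by
  obtain ⟨ι, f, v⟩ := w
  exact PreW.rank_lt_mk f v i

lemma rank_ind {P : PreW A → Prop}
    (H : ∀ w : PreW A, (∀ u : PreW A, u.rank < w.rank → P u) → P w) :
    ∀ w, P w := by
  intro w
  have := (InvImage.wf (PreW.rank (A := A)) Ordinal.lt_wf).induction (C := P) w
  exact this H

end MemInd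
namespace MemInd

open ImplicativeAlgebra

variable {A : Type u} [CompleteLattice A] (IA : ImplicativeAlgebra A)

/-- Body of the reflexivity realizer: in context `[r, p]`, the term `λp. E (P p r)`. -/
def reflBody : Tm A 1 := absT IA (.app (.cst (Ec IA))
  (.app (.app (.cst (Pc IA)) (.var (Fin.last 1))) (.var ((Fin.last 0).castSucc))))

/-- The reflexivity realizer `Y (λr. P (λp. E (P p r)) (λp. E (P p r)))`. -/
def Rfl : A := fixA IA (evalC IA (absT IA
  (.app (.app (.cst (Pc IA)) (reflBody IA)) (reflBody IA))))

lemma reflBody_good : goodT IA (reflBody IA) := by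
  refine goodT_absT IA ?_
  simp only [goodT]
  exact ⟨Ec_mem IA, ⟨Pc_mem IA, trivial⟩, trivial⟩

lemma Rfl_mem : Rfl IA ∈ IA.Sig := by
  refine fixA_mem IA (evalC_mem IA (goodT_absT IA ?_))
  simp only [goodT]
  exact ⟨⟨Pc_mem IA, reflBody_good IA⟩, reflBody_good IA⟩

lemma Rfl_le : ∀ w : PreW A, Rfl IA ≤ IA.eqW w w := by
  refine rank_ind (A := A) fun w ih => ?_
  rw [eqW_def]
  refine le_trans (fixA_le IA _) ?_
  refine le_trans (absT_spec IA _ _ _) ?_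
  simp only [evalT]
  have hB : evalT IA (reflBody IA) (Fin.snoc Fin.elim0 (Rfl IA)) ≤ IA.subW w w := by
    refine le_iInf fun t => ?_
    refine abs_le_imp IA ?_
    simp only [evalT, Fin.snoc_castSucc, Fin.snoc_last]
    show _ ≤ IA.memW (w.fam t) w
    refine exI_le IA t ?_
    exact pair_le IA le_rfl (ih (w.fam t) (rank_fam_lt w t))
  exact pair_le IA hB hB

end MemInd
namespace MemInd

open ImplicativeAlgebra

variable {A : Type u} [CompleteLattice A] (IA : ImplicativeAlgebra A)

lemma memW_eq (a b : PreW A) :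
    IA.memW a b = IA.aex fun s : b.dom => IA.times (b.val s) (IA.eqW (b.fam s) a) := rfl

lemma subW_eq (a b : PreW A) :
    IA.subW a b = ⨅ t : a.dom, IA.imp (a.val t) (IA.memW (a.fam t) b) := rfl

lemma evalC_app1 (t : Tm A 1) (x : A) :
    appA IA (evalC IA (absT IA t)) x ≤ evalT IA t (Fin.snoc Fin.elim0 x) :=
  absT_spec IA t _ x

lemma evalC_app2 (t : Tm A 2) (x y : A) :
    appA IA (appA IA (evalC IA (absT IA (absT IA t))) x) y ≤
      evalT IA t (Fin.snoc (Fin.snoc Fin.elim0 x) y) :=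
  (appA_mono IA (evalC_app1 IA _ x) le_rfl).trans (absT_spec IA t _ y)

lemma evalC_app3 (t : Tm A 3) (x y z : A) :
    appA IA (appA IA (appA IA (evalC IA (absT IA (absT IA (absT IA t)))) x) y) z ≤
      evalT IA t (Fin.snoc (Fin.snoc (Fin.snoc Fin.elim0 x) y) z) :=
  (appA_mono IA (evalC_app2 IA _ x y) le_rfl).trans (absT_spec IA t _ z)

/-- The symmetry realizer `λe. P (snd e) (fst e)`. -/
def Sy : A := evalC IA (absT IA
  (.app (.app (.cst (Pc IA)) (.app (.var (Fin.last 0)) (.cst (KI IA))))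
    (.app (.var (Fin.last 0)) (.cst (Kc IA)))))

lemma Sy_mem : Sy IA ∈ IA.Sig := by
  refine evalC_mem IA (goodT_absT IA ?_)
  simp only [goodT]
  exact ⟨⟨Pc_mem IA, trivial, KI_mem IA⟩, trivial, Kc_mem IA⟩

lemma Sy_le (a b : PreW A) : Sy IA ≤ IA.imp (IA.eqW a b) (IA.eqW b a) := by
  refine abs_le_imp IA ?_
  simp only [evalT, Fin.snoc_last]
  rw [eqW_def IA a b, eqW_def IA b a]
  exact pair_le IA (snd_le IA le_rfl) (fst_le IA le_rfl)

end MemInd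
namespace MemInd

open ImplicativeAlgebra

variable {A : Type u} [CompleteLattice A] (IA : ImplicativeAlgebra A)

def fstT {n : ℕ} (t : Tm A n) : Tm A n := .app t (.cst (Kc IA))
def sndT {n : ℕ} (t : Tm A n) : Tm A n := .app t (.cst (KI IA))

lemma goodT_var {n : ℕ} (i : Fin n) : goodT IA (.var i) := by simp only [goodT]

lemma fstT_good {n : ℕ} {t : Tm A n} (h : goodT IA t) : goodT IA (fstT IA t) := by
  simp only [fstT, goodT]; exact ⟨h, Kc_mem IA⟩

lemma sndT_good {n : ℕ} {t : Tm A n} (h : goodT IA t) : goodT IA (sndT IA t) := by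
  simp only [sndT, goodT]; exact ⟨h, KI_mem IA⟩

/-- ctx `[g, d1, d2, p, q, q']`: `E (P (fst q') (g (snd q') (snd q)))`. -/
def halfQ3 : Tm A 6 := .app (.cst (Ec IA))
  (.app (.app (.cst (Pc IA)) (fstT IA (.var (Fin.last 5))))
    (.app (.app (.var ((Fin.last 0).castSucc.castSucc.castSucc.castSucc.castSucc))
        (sndT IA (.var (Fin.last 5))))
      (sndT IA (.var ((Fin.last 4).castSucc)))))

/-- ctx `[g, d1, d2, p, q]`: `(d2 (fst q)) (λq'. …)`. -/
def halfQ2 : Tm A 5 :=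
  .app (.app (.var ((Fin.last 2).castSucc.castSucc)) (fstT IA (.var (Fin.last 4))))
    (absT IA (halfQ3 IA))

/-- ctx `[g, d1, d2, p]`: `(d1 p) (λq. …)`. -/
def halfP : Tm A 4 :=
  .app (.app (.var ((Fin.last 1).castSucc.castSucc)) (.var (Fin.last 3)))
    (absT IA (halfQ2 IA))

/-- The "one inclusion of transitivity" combinator. -/
def HalfC : A := evalC IA (absT IA (absT IA (absT IA (absT IA (halfP IA)))))

lemma halfQ3_good : goodT IA (halfQ3 IA) := by
  simp only [halfQ3, goodT]
  exact ⟨Ec_mem IA, ⟨⟨Pc_mem IA, fstT_good IA (goodT_var IA _)⟩,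
    ⟨⟨trivial, sndT_good IA (goodT_var IA _)⟩, sndT_good IA (goodT_var IA _)⟩⟩⟩

lemma halfQ2_good : goodT IA (halfQ2 IA) := by
  simp only [halfQ2, goodT]
  exact ⟨⟨trivial, fstT_good IA (goodT_var IA _)⟩, goodT_absT IA (halfQ3_good IA)⟩

lemma halfP_good : goodT IA (halfP IA) := by
  simp only [halfP, goodT]
  exact ⟨⟨trivial, trivial⟩, goodT_absT IA (halfQ2_good IA)⟩

lemma HalfC_mem : HalfC IA ∈ IA.Sig :=
  evalC_mem IA (goodT_absT IA (goodT_absT IA (goodT_absT IA (goodT_absT IA (halfP_good IA)))))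

lemma Half_spec {a b c : PreW A} {g d1 d2 : A}
    (hd1 : d1 ≤ IA.subW a b) (hd2 : d2 ≤ IA.subW b c)
    (hg : ∀ (x y : PreW A) (s : b.dom),
      g ≤ IA.imp (IA.eqW x (b.fam s)) (IA.imp (IA.eqW (b.fam s) y) (IA.eqW x y))) :
    appA IA (appA IA (appA IA (HalfC IA) g) d1) d2 ≤ IA.subW a c := by
  refine le_trans (evalC_app3 IA _ g d1 d2) ?_
  rw [subW_eq]
  refine le_iInf fun t => ?_
  refine abs_le_imp IA ?_
  simp only [halfP, evalT, Fin.snoc_castSucc, Fin.snoc_last]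
  have hm : appA IA d1 (a.val t) ≤
      IA.aex fun s : b.dom => IA.times (b.val s) (IA.eqW (b.fam s) (a.fam t)) := by
    rw [← memW_eq]
    refine appA_le IA (hd1.trans ?_)
    rw [subW_eq]; exact iInf_le _ t
  refine exE_le IA hm fun s => ?_
  refine abs_le_imp IA ?_
  simp only [halfQ2, evalT, fstT, Fin.snoc_castSucc, Fin.snoc_last]
  have hm2 : appA IA d2 (appA IA (IA.times (b.val s) (IA.eqW (b.fam s) (a.fam t))) (Kc IA)) ≤
      IA.aex fun u : c.dom => IA.times (c.val u) (IA.eqW (c.fam u) (b.fam s)) := by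
    rw [← memW_eq]
    refine appA_le IA (hd2.trans ?_)
    rw [subW_eq]
    exact (iInf_le _ s).trans (IA.imp_antitone (fst_le IA le_rfl))
  refine exE_le IA hm2 fun u => ?_
  refine abs_le_imp IA ?_
  simp only [halfQ3, evalT, fstT, sndT, Fin.snoc_castSucc, Fin.snoc_last]
  rw [memW_eq]
  refine exI_le IA u (pair_le IA (fst_le IA le_rfl) ?_)
  refine appA_le IA ((appA_le IA (((hg (c.fam u) (a.fam t) s)).trans
    (IA.imp_antitone (snd_le IA le_rfl)))).trans (IA.imp_antitone (snd_le IA le_rfl)))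

/-- The transitivity realizer. -/
def cTtm : Tm A 0 := absT IA (absT IA (absT IA
  (.app (.app (.cst (Pc IA))
      (.app (.app (.app (.cst (HalfC IA)) (.var ((Fin.last 0).castSucc.castSucc)))
          (fstT IA (.var ((Fin.last 1).castSucc)))) (fstT IA (.var (Fin.last 2)))))
    (.app (.app (.app (.cst (HalfC IA)) (.var ((Fin.last 0).castSucc.castSucc)))
        (sndT IA (.var (Fin.last 2)))) (sndT IA (.var ((Fin.last 1).castSucc)))))))

def Tt : A := fixA IA (evalC IA (cTtm IA))

lemma Tt_mem : Tt IA ∈ IA.Sig := by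
  refine fixA_mem IA (evalC_mem IA (goodT_absT IA (goodT_absT IA (goodT_absT IA ?_))))
  simp only [goodT]
  exact ⟨⟨Pc_mem IA, ⟨⟨⟨HalfC_mem IA, trivial⟩, fstT_good IA (goodT_var IA _)⟩, fstT_good IA (goodT_var IA _)⟩⟩,
    ⟨⟨⟨HalfC_mem IA, trivial⟩, sndT_good IA (goodT_var IA _)⟩, sndT_good IA (goodT_var IA _)⟩⟩

lemma Tt_le : ∀ (b a c : PreW A),
    Tt IA ≤ IA.imp (IA.eqW a b) (IA.imp (IA.eqW b c) (IA.eqW a c)) := by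
  refine rank_ind (A := A)
    (P := fun b => ∀ a c : PreW A,
      Tt IA ≤ IA.imp (IA.eqW a b) (IA.imp (IA.eqW b c) (IA.eqW a c))) fun b ih a c => ?_
  refine le_trans (fixA_le IA _) ?_
  refine le_trans (evalC_app1 IA _ (Tt IA)) ?_
  refine abs_le_imp IA ?_
  refine abs_le_imp IA ?_
  simp only [evalT, fstT, sndT, Fin.snoc_castSucc, Fin.snoc_last]
  rw [eqW_def IA a c]
  refine pair_le IA ?_ ?_
  · refine Half_spec IA (fst_le IA (le_of_eq (eqW_def IA a b)))
      (fst_le IA (le_of_eq (eqW_def IA b c))) ?_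
    exact fun x y s => ih (b.fam s) (rank_fam_lt b s) x y
  · refine Half_spec IA (snd_le IA (le_of_eq (eqW_def IA b c)))
      (snd_le IA (le_of_eq (eqW_def IA a b))) ?_
    exact fun x y s => ih (b.fam s) (rank_fam_lt b s) x y

end MemInd
namespace MemInd

open ImplicativeAlgebra

variable {A : Type u} [CompleteLattice A] (IA : ImplicativeAlgebra A)

section Main

variable (κ : Cardinal.{u}) {n : ℕ} (φ : SetFormula (n + 1)) (v : Fin n → WSet A κ)

/-- Interpretation of `φ` with last variable `β`. -/
noncomputable def Fv (β : WSet A κ) : A := IA.interp κ φ (Fin.snoc v β)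

/-- Interpretation of the induction hypothesis `∀x (∀y (y ∈ x → φ[y]) → φ[x])`. -/
noncomputable def Hv : A := ⨅ α : WSet A κ, IA.imp
  (⨅ β : WSet A κ, IA.imp (IA.memW β.1 α.1) (Fv IA κ φ v β)) (Fv IA κ φ v α)

end Main

/-- ctx `[g, h, e, m, p, q]`: `(g h) (Sy (Tt (snd q) (snd p)))`. -/
def psiQ : Tm A 6 :=
  .app (.app (.var ((Fin.last 0).castSucc.castSucc.castSucc.castSucc.castSucc))
      (.var ((Fin.last 1).castSucc.castSucc.castSucc.castSucc)))
    (.app (.cst (Sy IA))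
      (.app (.app (.cst (Tt IA)) (sndT IA (.var (Fin.last 5))))
        (sndT IA (.var ((Fin.last 4).castSucc)))))

/-- ctx `[g, h, e, m, p]`: `((fst e) (fst p)) (λq. …)`. -/
def psiP : Tm A 5 :=
  .app (.app (fstT IA (.var ((Fin.last 2).castSucc.castSucc))) (fstT IA (.var (Fin.last 4))))
    (absT IA (psiQ IA))

/-- ctx `[g, h, e, m]`: `m (λp. …)`. -/
def psiM : Tm A 4 := .app (.var (Fin.last 3)) (absT IA (psiP IA))

/-- ctx `[g, h, e]`: `h (λm. …)`. -/
def psiB : Tm A 3 := .app (.var ((Fin.last 1).castSucc)) (absT IA (psiM IA))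

/-- The main recursive realizer. -/
def Psi : A := fixA IA (evalC IA (absT IA (absT IA (absT IA (psiB IA)))))

lemma psiQ_good : goodT IA (psiQ IA) := by
  simp only [psiQ, goodT]
  exact ⟨⟨trivial, trivial⟩, ⟨Sy_mem IA,
    ⟨⟨Tt_mem IA, sndT_good IA (goodT_var IA _)⟩, sndT_good IA (goodT_var IA _)⟩⟩⟩

lemma psiP_good : goodT IA (psiP IA) := by
  simp only [psiP, goodT]
  exact ⟨⟨fstT_good IA (goodT_var IA _), fstT_good IA (goodT_var IA _)⟩,
    goodT_absT IA (psiQ_good IA)⟩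

lemma psiM_good : goodT IA (psiM IA) := by
  simp only [psiM, goodT]
  exact ⟨trivial, goodT_absT IA (psiP_good IA)⟩

lemma psiB_good : goodT IA (psiB IA) := by
  simp only [psiB, goodT]
  exact ⟨trivial, goodT_absT IA (psiM_good IA)⟩

lemma Psi_mem : Psi IA ∈ IA.Sig :=
  fixA_mem IA (evalC_mem IA (goodT_absT IA (goodT_absT IA (goodT_absT IA (psiB_good IA)))))

lemma Psi_spec (κ : Cardinal.{u}) {n : ℕ} (φ : SetFormula (n + 1)) (v : Fin n → WSet A κ) :
    ∀ (α : PreW A), α.HSmall κ →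
      appA IA (Psi IA) (Hv IA κ φ v) ≤
        ⨅ β : WSet A κ, IA.imp (IA.eqW β.1 α) (Fv IA κ φ v β) := by
  refine rank_ind (A := A) (P := fun α => α.HSmall κ →
      appA IA (Psi IA) (Hv IA κ φ v) ≤
        ⨅ β : WSet A κ, IA.imp (IA.eqW β.1 α) (Fv IA κ φ v β)) fun α ih hsm => ?_
  refine le_trans (appA_mono IA (fixA_le IA _) le_rfl) ?_
  refine le_trans (evalC_app2 IA _ (Psi IA) (Hv IA κ φ v)) ?_
  refine le_iInf fun β => ?_
  refine abs_le_imp IA ?_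
  simp only [psiB, evalT, Fin.snoc_castSucc, Fin.snoc_last]
  -- appA (Hv) Km ≤ Fv β
  refine appA_le IA (le_trans (iInf_le _ β) (IA.imp_antitone ?_))
  refine le_iInf fun γ => ?_
  refine abs_le_imp IA ?_
  simp only [psiM, evalT, Fin.snoc_castSucc, Fin.snoc_last]
  -- appA (memW γ.1 β.1) Kp ≤ Fv γ
  refine exE_le IA (le_of_eq (memW_eq IA γ.1 β.1)) fun s => ?_
  refine abs_le_imp IA ?_
  simp only [psiP, fstT, evalT, Fin.snoc_castSucc, Fin.snoc_last]
  have hm2 : appA IA (appA IA (IA.eqW β.1 α) (Kc IA))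
      (appA IA (IA.times (β.1.val s) (IA.eqW (β.1.fam s) γ.1)) (Kc IA)) ≤
      IA.aex fun t : α.dom => IA.times (α.val t) (IA.eqW (α.fam t) (β.1.fam s)) := by
    rw [← memW_eq]
    refine appA_le IA ((fst_le IA (le_of_eq (eqW_def IA β.1 α))).trans ?_)
    rw [subW_eq]
    exact (iInf_le _ s).trans (IA.imp_antitone (fst_le IA le_rfl))
  refine exE_le IA hm2 fun t => ?_
  refine abs_le_imp IA ?_
  simp only [psiQ, sndT, evalT, Fin.snoc_castSucc, Fin.snoc_last]
  -- appA (appA Psi Hv) (appA Sy (appA (appA Tt (snd Qt)) (snd Ps))) ≤ Fv γ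
  have hinner : appA IA (appA IA (Tt IA)
      (appA IA (IA.times (α.val t) (IA.eqW (α.fam t) (β.1.fam s))) (KI IA)))
      (appA IA (IA.times (β.1.val s) (IA.eqW (β.1.fam s) γ.1)) (KI IA)) ≤
      IA.eqW (α.fam t) γ.1 := by
    refine appA_le IA ((appA_le IA ((Tt_le IA (β.1.fam s) (α.fam t) γ.1).trans
      (IA.imp_antitone (snd_le IA le_rfl)))).trans (IA.imp_antitone (snd_le IA le_rfl)))
  have hsy : appA IA (Sy IA) (appA IA (appA IA (Tt IA)
      (appA IA (IA.times (α.val t) (IA.eqW (α.fam t) (β.1.fam s))) (KI IA)))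
      (appA IA (IA.times (β.1.val s) (IA.eqW (β.1.fam s) γ.1)) (KI IA))) ≤
      IA.eqW γ.1 (α.fam t) :=
    appA_le IA ((Sy_le IA (α.fam t) γ.1).trans (IA.imp_antitone hinner))
  have ihA := ih (α.fam t) (rank_fam_lt α t) (hsm.fam t)
  exact appA_le IA (ihA.trans ((iInf_le _ γ).trans (IA.imp_antitone hsy)))

/-- The realizer of the ∈-induction instance: `λh. (Psi h) Rfl`. -/
def Theta : A := evalC IA (absT IA
  (.app (.app (.cst (Psi IA)) (.var (Fin.last 0))) (.cst (Rfl IA))))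

lemma Theta_mem : Theta IA ∈ IA.Sig := by
  refine evalC_mem IA (goodT_absT IA ?_)
  simp only [goodT]
  exact ⟨⟨Psi_mem IA, trivial⟩, Rfl_mem IA⟩

lemma Theta_le (κ : Cardinal.{u}) {n : ℕ} (φ : SetFormula (n + 1)) (v : Fin n → WSet A κ) :
    Theta IA ≤ IA.imp (Hv IA κ φ v) (⨅ α : WSet A κ, Fv IA κ φ v α) := by
  refine abs_le_imp IA ?_
  simp only [evalT, Fin.snoc_last]
  refine le_iInf fun α => ?_
  refine appA_le IA ((Psi_spec IA κ φ v α.1 α.2).trans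
    ((iInf_le _ α).trans (IA.imp_antitone (Rfl_le IA α.1))))

end MemInd
namespace MemInd

open ImplicativeAlgebra

variable {A : Type u} [CompleteLattice A] (IA : ImplicativeAlgebra A) (κ : Cardinal.{u})

lemma interp_rename : ∀ {n m : ℕ} (ψ : SetFormula n) (f : Fin n → Fin m)
    (v : Fin m → WSet A κ), IA.interp κ (ψ.rename f) v = IA.interp κ ψ (v ∘ f)
  | _, _, .bot, f, v => rfl
  | _, _, .mem i j, f, v => rfl
  | _, _, .eq i j, f, v => rfl
  | _, _, .and ψ χ, f, v => by
    simp only [SetFormula.rename, ImplicativeAlgebra.interp,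
      interp_rename ψ f v, interp_rename χ f v]
  | _, _, .or ψ χ, f, v => by
    simp only [SetFormula.rename, ImplicativeAlgebra.interp,
      interp_rename ψ f v, interp_rename χ f v]
  | _, _, .imp ψ χ, f, v => by
    simp only [SetFormula.rename, ImplicativeAlgebra.interp,
      interp_rename ψ f v, interp_rename χ f v]
  | _, _, .ex ψ, f, v => by
    simp only [SetFormula.rename, ImplicativeAlgebra.interp]
    have h : ∀ β : WSet A κ,
        IA.interp κ (ψ.rename (Fin.snoc (Fin.castSucc ∘ f) (Fin.last _))) (Fin.snoc v β)
          = IA.interp κ ψ (Fin.snoc (v ∘ f) β) := by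
      intro β
      rw [interp_rename ψ _ (Fin.snoc v β)]
      congr 1
      funext i
      induction i using Fin.lastCases with
      | last => simp [Function.comp, Fin.snoc_last]
      | cast j => simp [Function.comp, Fin.snoc_castSucc]
    simp only [h]
  | _, _, .all ψ, f, v => by
    simp only [SetFormula.rename, ImplicativeAlgebra.interp]
    refine iInf_congr fun β => ?_
    rw [interp_rename ψ _ (Fin.snoc v β)]
    congr 1
    funext i
    induction i using Fin.lastCases with
    | last => simp [Function.comp, Fin.snoc_last]
    | cast j => simp [Function.comp, Fin.snoc_castSucc]

lemma le_allClose : ∀ {n : ℕ} (ψ : SetFormula n) {θ : A},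
    (∀ v, θ ≤ IA.interp κ ψ v) → θ ≤ IA.interp κ ψ.allClose (fun i => i.elim0)
  | 0, ψ, θ, h => h _
  | n + 1, ψ, θ, h => by
    show θ ≤ IA.interp κ (SetFormula.allClose (.all ψ)) _
    exact le_allClose (.all ψ) fun v => le_iInf fun β => h (Fin.snoc v β)

lemma interp_hyp {n : ℕ} (φ : SetFormula (n + 1)) (v : Fin n → WSet A κ) :
    IA.interp κ (SetFormula.all ((SetFormula.all ((SetFormula.mem (Fin.last (n + 1)) ((Fin.last n).castSucc)).imp
        (φ.rename (Fin.snoc (fun i => i.castSucc.castSucc) (Fin.last (n + 1)))))).imp φ)) v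
      = Hv IA κ φ v := by
  rw [Hv]
  simp only [ImplicativeAlgebra.interp]
  refine iInf_congr fun α => ?_
  congr 1
  refine iInf_congr fun β => ?_
  congr 1
  · simp [Fin.snoc_last, Fin.snoc_castSucc]
  · rw [interp_rename]
    rw [Fv]
    congr 1
    funext i
    induction i using Fin.lastCases with
    | last => simp [Function.comp, Fin.snoc_last]
    | cast j => simp [Function.comp, Fin.snoc_castSucc]

end MemInd
theorem stmt18 {A : Type u} [CompleteLattice A] (IA : ImplicativeAlgebra A)
    (κ : Cardinal.{u}) (hκ : κ.IsInaccessible) (hA : Cardinal.mk A < κ) (n : ℕ) (φ : SetFormula (n + 1)) :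
    IA.interp κ
      (SetFormula.allClose
        ((SetFormula.all
          ((SetFormula.all ((SetFormula.mem (Fin.last (n + 1)) ((Fin.last n).castSucc)).imp
              (φ.rename (Fin.snoc (fun i => i.castSucc.castSucc) (Fin.last (n + 1)))))).imp
            φ)).imp
         (SetFormula.all φ)))
      (fun i => i.elim0) ∈ IA.Sig := by
  refine IA.Sig_upward (MemInd.Theta_mem IA) (MemInd.le_allClose IA κ _ fun v => ?_)
  show MemInd.Theta IA ≤ IA.imp _ (⨅ β : WSet A κ, IA.interp κ φ (Fin.snoc v β))
  rw [MemInd.interp_hyp IA κ φ v]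
  exact MemInd.Theta_le IA κ φ v
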